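/- Suppose that every optimal decision rule d̂* of the extended MDP satisfies: (1) d̂*(2,j) ∉ {a11, a12} for j = 3, …, N-3; (2) d̂*(2,N-2) ≠ a11; (3) d̂*(i,2) ∉ {a21, a22} for i = 3, …, N-3; (4) d̂*(N-2,2) ≠ a21; (5) d̂*(2,2) ∉ {a11, a12, a21, a22}. Then every optimal decision rule d* of the auxiliary MDP satisfies: (1') d*(2,j) ∉ {a11', a12'} for j = 3, …, N-3; (2') d*(2,N-2) ≠ a11'; (3') d*(i,2) ∉ {a21', a22'} for i = 3, …, N-3; (4') d*(N-2,2) ≠ a21'; (5') d*(2,2) ∉ {a11', a12', a21', a22'}. -/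

import Mathlib

namespace AuxMDP

/-- The action labels of the auxiliary MDP. -/
inductive Lab
  | a11 | a12 | a21 | a22 | a11p | a12p | a21p | a22p | a0 | atil | zero
  deriving DecidableEq

/-- Side lengths in `{2, …, N-2} ∪ {N}`. -/
def goodIdx (N i : ℕ) : Prop := (2 ≤ i ∧ i ≤ N - 2) ∨ i = N

instance (N i : ℕ) : Decidable (goodIdx N i) := by unfold goodIdx; infer_instance

/-- The state space `Ŝ` of the auxiliary MDP. -/
def ShatP (N : ℕ) (s : ℕ × ℕ) : Prop :=
  (goodIdx N s.1 ∧ goodIdx N s.2) ∨ s = (0, 0)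

instance (N : ℕ) (s : ℕ × ℕ) : Decidable (ShatP N s) := by unfold ShatP; infer_instance

/-- The state space as a `Finset`. -/
def ShatF (N : ℕ) : Finset (ℕ × ℕ) :=
  (Finset.range (N + 1) ×ˢ Finset.range (N + 1)).filter (ShatP N)

/-- The admissible action set `Â(s)`. -/
def ActOK (N : ℕ) (s : ℕ × ℕ) (a : Lab) : Prop :=
  if s = (0, 0) ∨ s = (N, N) then a = Lab.zero
  else
    match a with
    | Lab.zero => True
    | Lab.a11 => 3 ≤ s.1 ∧ s.2 ≤ N - 2
    | Lab.a12 => 3 ≤ s.1 ∧ s.2 ≤ N - 3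
    | Lab.a11p => s.1 ≤ N - 2 ∧ s.2 ≤ N - 2
    | Lab.a12p => s.1 ≤ N - 2 ∧ s.2 ≤ N - 3
    | Lab.a21 => 3 ≤ s.2 ∧ s.1 ≤ N - 2
    | Lab.a22 => 3 ≤ s.2 ∧ s.1 ≤ N - 3
    | Lab.a21p => s.2 ≤ N - 2 ∧ s.1 ≤ N - 2
    | Lab.a22p => s.2 ≤ N - 2 ∧ s.1 ≤ N - 3
    | Lab.a0 => s.1 ≤ N - 2 ∧ s.2 ≤ N - 2
    | Lab.atil => s.1 ≤ N - 2 ∧ s.2 ≤ N - 2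

/-- Kernel of the action `a11` (flip at distance 1 from the horizontal side,
away from the corners). -/
noncomputable def ker11 (N : ℕ) (s s' : ℕ × ℕ) : ℝ :=
  if s.2 ≤ N - 3 then
    (if s' = s then 1/3 else if s' = (s.1, s.2 + 1) then 2/3 else 0)
  else if s.2 = N - 2 then
    (if s' = s then 1/4 else if s' = (s.1, N) then 3/4 else 0)
  else 0

/-- Kernel of the action `a11'`. -/
noncomputable def ker11p (N : ℕ) (s s' : ℕ × ℕ) : ℝ :=
  if s.2 ≤ N - 3 then
    (if s' = s then 1/2 else if s' = (s.1, s.2 + 1) then 1/2 else 0)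
  else if s.2 = N - 2 then
    (if s' = s then 1/3 else if s' = (s.1, N) then 2/3 else 0)
  else 0

/-- Kernel of the action `a12`. -/
noncomputable def ker12 (N : ℕ) (s s' : ℕ × ℕ) : ℝ :=
  if s.2 ≤ N - 4 then
    (if s' = s then 5/9 else if s' = (s.1, s.2 + 1) then 7/27
     else if s' = (s.1, s.2 + 2) then 5/27 else 0)
  else if s.2 = N - 3 then
    (if s' = s then 7/18 else if s' = (s.1, N - 2) then 31/144
     else if s' = (s.1, N) then 19/48 else 0)
  else 0

/-- Kernel of the action `a12'`. -/
noncomputable def ker12p (N : ℕ) (s s' : ℕ × ℕ) : ℝ :=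
  if s.2 ≤ N - 4 then
    (if s' = s then 5/8 else if s' = (s.1, s.2 + 1) then 1/4
     else if s' = (s.1, s.2 + 2) then 1/8 else 0)
  else if s.2 = N - 3 then
    (if s' = s then 4/9 else if s' = (s.1, N - 2) then 5/27
     else if s' = (s.1, N) then 10/27 else 0)
  else 0

/-- Kernel of the action `a0` (diagonal flip). -/
noncomputable def ker0 (N : ℕ) (s s' : ℕ × ℕ) : ℝ :=
  if s.1 ≤ N - 3 ∧ s.2 ≤ N - 3 then
    (if s' = s then 4/9 else if s' = (s.1 + 1, s.2) then 1/9
     else if s' = (s.1, s.2 + 1) then 1/9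
     else if s' = (s.1 + 1, s.2 + 1) then 1/3 else 0)
  else if s.1 ≤ N - 3 ∧ s.2 = N - 2 then
    (if s' = s then 5/12 else if s' = (s.1, N) then 1/8
     else if s' = (s.1 + 1, N - 2) then 1/9
     else if s' = (s.1 + 1, N) then 25/72 else 0)
  else if s.1 = N - 2 ∧ s.2 ≤ N - 3 then
    (if s' = s then 5/12 else if s' = (N, s.2) then 1/8
     else if s' = (N - 2, s.2 + 1) then 1/9
     else if s' = (N, s.2 + 1) then 25/72 else 0)
  else if s.1 = N - 2 ∧ s.2 = N - 2 then
    (if s' = s then 7/18 else if s' = (N, N - 2) then 1/8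
     else if s' = (N - 2, N) then 1/8
     else if s' = (N, N) then 13/36 else 0)
  else 0

/-- Kernel of the action `ã` (flip a corner spin of the rectangle). -/
noncomputable def kerTil (N : ℕ) (s s' : ℕ × ℕ) : ℝ :=
  if 3 ≤ s.1 ∧ 3 ≤ s.2 then (if s' = s then 1 else 0)
  else if s.1 = 2 ∧ 3 ≤ s.2 then
    (if s' = s then 1/2 else if s' = (2, s.2 - 1) then 1/2 else 0)
  else if 3 ≤ s.1 ∧ s.2 = 2 then
    (if s' = s then 1/2 else if s' = (s.1 - 1, 2) then 1/2 else 0)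
  else if s.1 = 2 ∧ s.2 = 2 then
    (if s' = s then 1/3 else if s' = ((0 : ℕ), (0 : ℕ)) then 2/3 else 0)
  else 0

/-- Coordinate swap. -/
def swp (s : ℕ × ℕ) : ℕ × ℕ := (s.2, s.1)

/-- The transition kernel `P̂(s' | s, a)` of the auxiliary MDP. -/
noncomputable def Phat (N : ℕ) (s : ℕ × ℕ) (a : Lab) (s' : ℕ × ℕ) : ℝ :=
  match a with
  | Lab.zero => if s' = s then 1 else 0
  | Lab.a11 => ker11 N s s'
  | Lab.a12 => ker12 N s s'
  | Lab.a11p => ker11p N s s'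
  | Lab.a12p => ker12p N s s'
  | Lab.a21 => ker11 N (swp s) (swp s')
  | Lab.a22 => ker12 N (swp s) (swp s')
  | Lab.a21p => ker11p N (swp s) (swp s')
  | Lab.a22p => ker12p N (swp s) (swp s')
  | Lab.a0 => ker0 N s s'
  | Lab.atil => kerTil N s s'

/-- The reward function of the auxiliary MDP. -/
noncomputable def rhat (N : ℕ) (s : ℕ × ℕ) : ℝ := if s = (N, N) then 1 else 0

/-- `d` is a decision rule: it selects admissible actions on `Ŝ`. -/
def IsRule (N : ℕ) (d : ℕ × ℕ → Lab) : Prop :=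
  ∀ s : ℕ × ℕ, ShatP N s → ActOK N s (d s)

/-- `v` is the value function of the decision rule `d` (the unique solution
of the evaluation equations on `Ŝ`). -/
def IsValue (N : ℕ) (lam : ℝ) (d : ℕ × ℕ → Lab) (v : ℕ × ℕ → ℝ) : Prop :=
  ∀ s ∈ ShatF N, v s = rhat N s + lam * ∑ s' ∈ ShatF N, Phat N s (d s) s' * v s'

/-- `d` is an optimal decision rule: its value function dominates the value
function of every decision rule at every state of `Ŝ`. -/
def IsOptimal (N : ℕ) (lam : ℝ) (d : ℕ × ℕ → Lab) : Prop :=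
  IsRule N d ∧
  ∀ vd : ℕ × ℕ → ℝ, IsValue N lam d vd →
    ∀ d' : ℕ × ℕ → Lab, IsRule N d' →
      ∀ v' : ℕ × ℕ → ℝ, IsValue N lam d' v' →
        ∀ s : ℕ × ℕ, ShatP N s → v' s ≤ vd s

/-- The enlarged admissible action sets `Â'` of the extended MDP. -/
def ActOK' (N : ℕ) (s : ℕ × ℕ) (a : Lab) : Prop :=
  ActOK N s a ∨
  (s.1 = 2 ∧ ((a = Lab.a11 ∧ 3 ≤ s.2 ∧ s.2 ≤ N - 2) ∨
              (a = Lab.a12 ∧ 3 ≤ s.2 ∧ s.2 ≤ N - 3))) ∨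
  (s.2 = 2 ∧ ((a = Lab.a21 ∧ 3 ≤ s.1 ∧ s.1 ≤ N - 2) ∨
              (a = Lab.a22 ∧ 3 ≤ s.1 ∧ s.1 ≤ N - 3))) ∨
  (s = (2, 2) ∧ (a = Lab.a11 ∨ a = Lab.a12 ∨ a = Lab.a21 ∨ a = Lab.a22))

/-- Decision rules of the extended MDP. -/
def IsRule' (N : ℕ) (d : ℕ × ℕ → Lab) : Prop :=
  ∀ s : ℕ × ℕ, ShatP N s → ActOK' N s (d s)

/-- Optimal decision rules of the extended MDP (same kernel and reward). -/
def IsOptimal' (N : ℕ) (lam : ℝ) (d : ℕ × ℕ → Lab) : Prop :=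
  IsRule' N d ∧
  ∀ vd : ℕ × ℕ → ℝ, IsValue N lam d vd →
    ∀ d' : ℕ × ℕ → Lab, IsRule' N d' →
      ∀ v' : ℕ × ℕ → ℝ, IsValue N lam d' v' →
        ∀ s : ℕ × ℕ, ShatP N s → v' s ≤ vd s

/-! ### Auxiliary infrastructure -/

instance : Fintype Lab where
  elems := {Lab.a11, Lab.a12, Lab.a21, Lab.a22, Lab.a11p, Lab.a12p, Lab.a21p,
    Lab.a22p, Lab.a0, Lab.atil, Lab.zero}
  complete := by intro a; cases a <;> simp

instance (N : ℕ) (s : ℕ × ℕ) (a : Lab) : Decidable (ActOK N s a) := by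
  unfold ActOK
  split
  · infer_instance
  · cases a <;> exact inferInstanceAs (Decidable _)

instance (N : ℕ) (s : ℕ × ℕ) (a : Lab) : Decidable (ActOK' N s a) := by
  unfold ActOK'; infer_instance

lemma mem_ShatF_iff {N : ℕ} {s : ℕ × ℕ} : s ∈ ShatF N ↔ ShatP N s := by
  unfold ShatF
  simp only [Finset.mem_filter, Finset.mem_product, Finset.mem_range]
  constructor
  · rintro ⟨_, h⟩; exact h
  · intro h
    refine ⟨?_, h⟩
    rcases h with ⟨h1, h2⟩ | h
    · unfold goodIdx at h1 h2; omega
    · subst h; omega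

lemma mem_F {N : ℕ} {i j : ℕ} (hi : (2 ≤ i ∧ i ≤ N - 2) ∨ i = N)
    (hj : (2 ≤ j ∧ j ≤ N - 2) ∨ j = N) : (i, j) ∈ ShatF N := by
  rw [mem_ShatF_iff]; exact Or.inl ⟨hi, hj⟩

lemma ShatF_bounds {N : ℕ} (hN : 7 ≤ N) {s : ℕ × ℕ} (hs : s ∈ ShatF N) (h0 : s ≠ (0, 0)) :
    (2 ≤ s.1 ∧ (s.1 ≤ N - 2 ∨ s.1 = N)) ∧ (2 ≤ s.2 ∧ (s.2 ≤ N - 2 ∨ s.2 = N)) := by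
  rw [mem_ShatF_iff] at hs
  rcases hs with ⟨h1, h2⟩ | h
  · unfold goodIdx at h1 h2; omega
  · exact absurd h h0

lemma sum_pt1 {F : Finset (ℕ × ℕ)} {t1 : ℕ × ℕ} (h1 : t1 ∈ F) (c1 : ℝ)
    (v : ℕ × ℕ → ℝ) :
    ∑ x ∈ F, (if x = t1 then c1 else 0) * v x = c1 * v t1 := by
  rw [Finset.sum_eq_single t1]
  · simp
  · intro b _ hb; simp [hb]
  · intro h; exact absurd h1 h

lemma sum_pt2 {F : Finset (ℕ × ℕ)} {t1 t2 : ℕ × ℕ} (h1 : t1 ∈ F) (h2 : t2 ∈ F)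
    (h12 : t1 ≠ t2) (c1 c2 : ℝ) (v : ℕ × ℕ → ℝ) :
    ∑ x ∈ F, (if x = t1 then c1 else if x = t2 then c2 else 0) * v x
      = c1 * v t1 + c2 * v t2 := by
  have : ∀ x ∈ F, (if x = t1 then c1 else if x = t2 then c2 else 0) * v x
      = (if x = t1 then c1 else 0) * v x + (if x = t2 then c2 else 0) * v x := by
    intro x _
    by_cases e1 : x = t1
    · subst e1; simp [h12]
    · by_cases e2 : x = t2 <;> simp [e1, e2, Ne.symm h12]
  rw [Finset.sum_congr rfl this, Finset.sum_add_distrib, sum_pt1 h1, sum_pt1 h2]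

lemma sum_pt3 {F : Finset (ℕ × ℕ)} {t1 t2 t3 : ℕ × ℕ} (h1 : t1 ∈ F) (h2 : t2 ∈ F)
    (h3 : t3 ∈ F) (h12 : t1 ≠ t2) (h13 : t1 ≠ t3) (h23 : t2 ≠ t3)
    (c1 c2 c3 : ℝ) (v : ℕ × ℕ → ℝ) :
    ∑ x ∈ F, (if x = t1 then c1 else if x = t2 then c2 else if x = t3 then c3 else 0) * v x
      = c1 * v t1 + c2 * v t2 + c3 * v t3 := by
  have : ∀ x ∈ F, (if x = t1 then c1 else if x = t2 then c2 else if x = t3 then c3 else 0) * v x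
      = (if x = t1 then c1 else 0) * v x
        + (if x = t2 then c2 else if x = t3 then c3 else 0) * v x := by
    intro x _
    by_cases e1 : x = t1
    · subst e1; simp [h12, h13]
    · by_cases e2 : x = t2
      · subst e2; simp [e1]
      · by_cases e3 : x = t3 <;> simp [e1, e2, e3, Ne.symm h13]
  rw [Finset.sum_congr rfl this, Finset.sum_add_distrib, sum_pt1 h1,
    sum_pt2 h2 h3 h23]
  ring

lemma sum_pt4 {F : Finset (ℕ × ℕ)} {t1 t2 t3 t4 : ℕ × ℕ} (h1 : t1 ∈ F) (h2 : t2 ∈ F)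
    (h3 : t3 ∈ F) (h4 : t4 ∈ F) (h12 : t1 ≠ t2) (h13 : t1 ≠ t3) (h14 : t1 ≠ t4)
    (h23 : t2 ≠ t3) (h24 : t2 ≠ t4) (h34 : t3 ≠ t4)
    (c1 c2 c3 c4 : ℝ) (v : ℕ × ℕ → ℝ) :
    ∑ x ∈ F, (if x = t1 then c1 else if x = t2 then c2 else if x = t3 then c3
        else if x = t4 then c4 else 0) * v x
      = c1 * v t1 + c2 * v t2 + c3 * v t3 + c4 * v t4 := by
  have : ∀ x ∈ F, (if x = t1 then c1 else if x = t2 then c2 else if x = t3 then c3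
        else if x = t4 then c4 else 0) * v x
      = (if x = t1 then c1 else 0) * v x
        + (if x = t2 then c2 else if x = t3 then c3 else if x = t4 then c4 else 0) * v x := by
    intro x _
    by_cases e1 : x = t1
    · subst e1; simp [h12, h13, h14]
    · by_cases e2 : x = t2
      · subst e2; simp [e1]
      · by_cases e3 : x = t3
        · subst e3; simp [e1, e2]
        · by_cases e4 : x = t4 <;> simp [e1, e2, e3, e4, Ne.symm h14]
  rw [Finset.sum_congr rfl this, Finset.sum_add_distrib, sum_pt1 h1,
    sum_pt3 h2 h3 h4 h23 h24 h34]
  ring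

/-! ### Kernel evaluation lemmas -/

lemma pne₁ {s t : ℕ × ℕ} (h : s.1 ≠ t.1) : s ≠ t := fun e => h (congrArg Prod.fst e)
lemma pne₂ {s t : ℕ × ℕ} (h : s.2 ≠ t.2) : s ≠ t := fun e => h (congrArg Prod.snd e)

lemma rhat_ne {N : ℕ} {s : ℕ × ℕ} (h : s ≠ (N, N)) : rhat N s = 0 := if_neg h

lemma swp_swp (s : ℕ × ℕ) : swp (swp s) = s := rfl

lemma swp_mem {N : ℕ} {s : ℕ × ℕ} (hs : s ∈ ShatF N) : swp s ∈ ShatF N := by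
  rw [mem_ShatF_iff] at hs ⊢
  rcases hs with ⟨h1, h2⟩ | h
  · exact Or.inl ⟨h2, h1⟩
  · subst h; exact Or.inr rfl

lemma sum_swap_kernel {N : ℕ} (f : ℕ × ℕ → ℝ) (v : ℕ × ℕ → ℝ) :
    ∑ s' ∈ ShatF N, f (swp s') * v s' = ∑ t ∈ ShatF N, f t * v (swp t) := by
  refine Finset.sum_nbij' (fun t => swp t) (fun t => swp t) ?_ ?_ ?_ ?_ ?_ <;>
    intro a ha
  · exact swp_mem ha
  · exact swp_mem ha
  · rfl
  · rfl
  · rfl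

section Eval

variable {N : ℕ} (hN : 7 ≤ N) {s : ℕ × ℕ} (hs : s ∈ ShatF N) (h0 : s ≠ (0, 0))
  (v : ℕ × ℕ → ℝ)

include hs in
lemma eval_zero : ∑ s' ∈ ShatF N, Phat N s Lab.zero s' * v s' = v s := by
  have : ∑ s' ∈ ShatF N, Phat N s Lab.zero s' * v s' = 1 * v s := sum_pt1 hs 1 v
  rw [this, one_mul]

include hN hs h0

lemma eval_a11_lo (hb : s.2 ≤ N - 3) :
    ∑ s' ∈ ShatF N, Phat N s Lab.a11 s' * v s'
      = 1/3 * v s + 2/3 * v (s.1, s.2 + 1) := by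
  obtain ⟨⟨hi1, hi2⟩, ⟨hj1, hj2⟩⟩ := ShatF_bounds hN hs h0
  have ht : (s.1, s.2 + 1) ∈ ShatF N := mem_F (by omega) (by omega)
  have hker : ∀ x, Phat N s Lab.a11 x
      = (if x = s then 1/3 else if x = (s.1, s.2 + 1) then 2/3 else 0) := by
    intro x; simp only [Phat, ker11]; rw [if_pos hb]
  simp only [hker]
  exact sum_pt2 hs ht (pne₂ (by omega)) _ _ v

lemma eval_a11_hi (hb : s.2 = N - 2) :
    ∑ s' ∈ ShatF N, Phat N s Lab.a11 s' * v s'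
      = 1/4 * v s + 3/4 * v (s.1, N) := by
  obtain ⟨⟨hi1, hi2⟩, ⟨hj1, hj2⟩⟩ := ShatF_bounds hN hs h0
  have ht : (s.1, N) ∈ ShatF N := mem_F (by omega) (by omega)
  have hker : ∀ x, Phat N s Lab.a11 x
      = (if x = s then 1/4 else if x = (s.1, N) then 3/4 else 0) := by
    intro x; simp only [Phat, ker11]; rw [if_neg (by omega), if_pos hb]
  simp only [hker]
  exact sum_pt2 hs ht (pne₂ (by omega)) _ _ v

lemma eval_a11p_lo (hb : s.2 ≤ N - 3) :
    ∑ s' ∈ ShatF N, Phat N s Lab.a11p s' * v s'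
      = 1/2 * v s + 1/2 * v (s.1, s.2 + 1) := by
  obtain ⟨⟨hi1, hi2⟩, ⟨hj1, hj2⟩⟩ := ShatF_bounds hN hs h0
  have ht : (s.1, s.2 + 1) ∈ ShatF N := mem_F (by omega) (by omega)
  have hker : ∀ x, Phat N s Lab.a11p x
      = (if x = s then 1/2 else if x = (s.1, s.2 + 1) then 1/2 else 0) := by
    intro x; simp only [Phat, ker11p]; rw [if_pos hb]
  simp only [hker]
  exact sum_pt2 hs ht (pne₂ (by omega)) _ _ v

lemma eval_a11p_hi (hb : s.2 = N - 2) :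
    ∑ s' ∈ ShatF N, Phat N s Lab.a11p s' * v s'
      = 1/3 * v s + 2/3 * v (s.1, N) := by
  obtain ⟨⟨hi1, hi2⟩, ⟨hj1, hj2⟩⟩ := ShatF_bounds hN hs h0
  have ht : (s.1, N) ∈ ShatF N := mem_F (by omega) (by omega)
  have hker : ∀ x, Phat N s Lab.a11p x
      = (if x = s then 1/3 else if x = (s.1, N) then 2/3 else 0) := by
    intro x; simp only [Phat, ker11p]; rw [if_neg (by omega), if_pos hb]
  simp only [hker]
  exact sum_pt2 hs ht (pne₂ (by omega)) _ _ v

lemma eval_a12_lo (hb : s.2 ≤ N - 4) :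
    ∑ s' ∈ ShatF N, Phat N s Lab.a12 s' * v s'
      = 5/9 * v s + 7/27 * v (s.1, s.2 + 1) + 5/27 * v (s.1, s.2 + 2) := by
  obtain ⟨⟨hi1, hi2⟩, ⟨hj1, hj2⟩⟩ := ShatF_bounds hN hs h0
  have ht1 : (s.1, s.2 + 1) ∈ ShatF N := mem_F (by omega) (by omega)
  have ht2 : (s.1, s.2 + 2) ∈ ShatF N := mem_F (by omega) (by omega)
  have hker : ∀ x, Phat N s Lab.a12 x
      = (if x = s then 5/9 else if x = (s.1, s.2 + 1) then 7/27
         else if x = (s.1, s.2 + 2) then 5/27 else 0) := by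
    intro x; simp only [Phat, ker12]; rw [if_pos hb]
  simp only [hker]
  exact sum_pt3 hs ht1 ht2 (pne₂ (by omega)) (pne₂ (by omega)) (pne₂ (by omega)) _ _ _ v

lemma eval_a12_hi (hb : s.2 = N - 3) :
    ∑ s' ∈ ShatF N, Phat N s Lab.a12 s' * v s'
      = 7/18 * v s + 31/144 * v (s.1, N - 2) + 19/48 * v (s.1, N) := by
  obtain ⟨⟨hi1, hi2⟩, ⟨hj1, hj2⟩⟩ := ShatF_bounds hN hs h0
  have ht1 : (s.1, N - 2) ∈ ShatF N := mem_F (by omega) (by omega)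
  have ht2 : (s.1, N) ∈ ShatF N := mem_F (by omega) (by omega)
  have hker : ∀ x, Phat N s Lab.a12 x
      = (if x = s then 7/18 else if x = (s.1, N - 2) then 31/144
         else if x = (s.1, N) then 19/48 else 0) := by
    intro x; simp only [Phat, ker12]; rw [if_neg (by omega), if_pos hb]
  simp only [hker]
  exact sum_pt3 hs ht1 ht2 (pne₂ (by omega)) (pne₂ (by omega)) (pne₂ (by omega)) _ _ _ v

lemma eval_a12p_lo (hb : s.2 ≤ N - 4) :
    ∑ s' ∈ ShatF N, Phat N s Lab.a12p s' * v s'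
      = 5/8 * v s + 1/4 * v (s.1, s.2 + 1) + 1/8 * v (s.1, s.2 + 2) := by
  obtain ⟨⟨hi1, hi2⟩, ⟨hj1, hj2⟩⟩ := ShatF_bounds hN hs h0
  have ht1 : (s.1, s.2 + 1) ∈ ShatF N := mem_F (by omega) (by omega)
  have ht2 : (s.1, s.2 + 2) ∈ ShatF N := mem_F (by omega) (by omega)
  have hker : ∀ x, Phat N s Lab.a12p x
      = (if x = s then 5/8 else if x = (s.1, s.2 + 1) then 1/4
         else if x = (s.1, s.2 + 2) then 1/8 else 0) := by
    intro x; simp only [Phat, ker12p]; rw [if_pos hb]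
  simp only [hker]
  exact sum_pt3 hs ht1 ht2 (pne₂ (by omega)) (pne₂ (by omega)) (pne₂ (by omega)) _ _ _ v

lemma eval_a12p_hi (hb : s.2 = N - 3) :
    ∑ s' ∈ ShatF N, Phat N s Lab.a12p s' * v s'
      = 4/9 * v s + 5/27 * v (s.1, N - 2) + 10/27 * v (s.1, N) := by
  obtain ⟨⟨hi1, hi2⟩, ⟨hj1, hj2⟩⟩ := ShatF_bounds hN hs h0
  have ht1 : (s.1, N - 2) ∈ ShatF N := mem_F (by omega) (by omega)
  have ht2 : (s.1, N) ∈ ShatF N := mem_F (by omega) (by omega)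
  have hker : ∀ x, Phat N s Lab.a12p x
      = (if x = s then 4/9 else if x = (s.1, N - 2) then 5/27
         else if x = (s.1, N) then 10/27 else 0) := by
    intro x; simp only [Phat, ker12p]; rw [if_neg (by omega), if_pos hb]
  simp only [hker]
  exact sum_pt3 hs ht1 ht2 (pne₂ (by omega)) (pne₂ (by omega)) (pne₂ (by omega)) _ _ _ v

lemma eval_a21_lo (hb : s.1 ≤ N - 3) :
    ∑ s' ∈ ShatF N, Phat N s Lab.a21 s' * v s'
      = 1/3 * v s + 2/3 * v (s.1 + 1, s.2) := by
  have h0' : swp s ≠ (0, 0) := fun h => h0 (by rw [← swp_swp s, h]; rfl)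
  have := eval_a11_lo (s := swp s) hN (swp_mem hs) h0' (fun t => v (swp t)) hb
  rw [show (∑ s' ∈ ShatF N, Phat N s Lab.a21 s' * v s')
    = ∑ t ∈ ShatF N, Phat N (swp s) Lab.a11 t * v (swp t) from
      sum_swap_kernel (fun t => ker11 N (swp s) t) v] at *
  exact this

lemma eval_a21_hi (hb : s.1 = N - 2) :
    ∑ s' ∈ ShatF N, Phat N s Lab.a21 s' * v s'
      = 1/4 * v s + 3/4 * v (N, s.2) := by
  have h0' : swp s ≠ (0, 0) := fun h => h0 (by rw [← swp_swp s, h]; rfl)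
  have := eval_a11_hi (s := swp s) hN (swp_mem hs) h0' (fun t => v (swp t)) hb
  rw [show (∑ s' ∈ ShatF N, Phat N s Lab.a21 s' * v s')
    = ∑ t ∈ ShatF N, Phat N (swp s) Lab.a11 t * v (swp t) from
      sum_swap_kernel (fun t => ker11 N (swp s) t) v] at *
  exact this

lemma eval_a21p_lo (hb : s.1 ≤ N - 3) :
    ∑ s' ∈ ShatF N, Phat N s Lab.a21p s' * v s'
      = 1/2 * v s + 1/2 * v (s.1 + 1, s.2) := by
  have h0' : swp s ≠ (0, 0) := fun h => h0 (by rw [← swp_swp s, h]; rfl)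
  have := eval_a11p_lo (s := swp s) hN (swp_mem hs) h0' (fun t => v (swp t)) hb
  rw [show (∑ s' ∈ ShatF N, Phat N s Lab.a21p s' * v s')
    = ∑ t ∈ ShatF N, Phat N (swp s) Lab.a11p t * v (swp t) from
      sum_swap_kernel (fun t => ker11p N (swp s) t) v] at *
  exact this

lemma eval_a21p_hi (hb : s.1 = N - 2) :
    ∑ s' ∈ ShatF N, Phat N s Lab.a21p s' * v s'
      = 1/3 * v s + 2/3 * v (N, s.2) := by
  have h0' : swp s ≠ (0, 0) := fun h => h0 (by rw [← swp_swp s, h]; rfl)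
  have := eval_a11p_hi (s := swp s) hN (swp_mem hs) h0' (fun t => v (swp t)) hb
  rw [show (∑ s' ∈ ShatF N, Phat N s Lab.a21p s' * v s')
    = ∑ t ∈ ShatF N, Phat N (swp s) Lab.a11p t * v (swp t) from
      sum_swap_kernel (fun t => ker11p N (swp s) t) v] at *
  exact this

lemma eval_a22_lo (hb : s.1 ≤ N - 4) :
    ∑ s' ∈ ShatF N, Phat N s Lab.a22 s' * v s'
      = 5/9 * v s + 7/27 * v (s.1 + 1, s.2) + 5/27 * v (s.1 + 2, s.2) := by
  have h0' : swp s ≠ (0, 0) := fun h => h0 (by rw [← swp_swp s, h]; rfl)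
  have := eval_a12_lo (s := swp s) hN (swp_mem hs) h0' (fun t => v (swp t)) hb
  rw [show (∑ s' ∈ ShatF N, Phat N s Lab.a22 s' * v s')
    = ∑ t ∈ ShatF N, Phat N (swp s) Lab.a12 t * v (swp t) from
      sum_swap_kernel (fun t => ker12 N (swp s) t) v] at *
  exact this

lemma eval_a22_hi (hb : s.1 = N - 3) :
    ∑ s' ∈ ShatF N, Phat N s Lab.a22 s' * v s'
      = 7/18 * v s + 31/144 * v (N - 2, s.2) + 19/48 * v (N, s.2) := by
  have h0' : swp s ≠ (0, 0) := fun h => h0 (by rw [← swp_swp s, h]; rfl)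
  have := eval_a12_hi (s := swp s) hN (swp_mem hs) h0' (fun t => v (swp t)) hb
  rw [show (∑ s' ∈ ShatF N, Phat N s Lab.a22 s' * v s')
    = ∑ t ∈ ShatF N, Phat N (swp s) Lab.a12 t * v (swp t) from
      sum_swap_kernel (fun t => ker12 N (swp s) t) v] at *
  exact this

lemma eval_a22p_lo (hb : s.1 ≤ N - 4) :
    ∑ s' ∈ ShatF N, Phat N s Lab.a22p s' * v s'
      = 5/8 * v s + 1/4 * v (s.1 + 1, s.2) + 1/8 * v (s.1 + 2, s.2) := by
  have h0' : swp s ≠ (0, 0) := fun h => h0 (by rw [← swp_swp s, h]; rfl)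
  have := eval_a12p_lo (s := swp s) hN (swp_mem hs) h0' (fun t => v (swp t)) hb
  rw [show (∑ s' ∈ ShatF N, Phat N s Lab.a22p s' * v s')
    = ∑ t ∈ ShatF N, Phat N (swp s) Lab.a12p t * v (swp t) from
      sum_swap_kernel (fun t => ker12p N (swp s) t) v] at *
  exact this

lemma eval_a22p_hi (hb : s.1 = N - 3) :
    ∑ s' ∈ ShatF N, Phat N s Lab.a22p s' * v s'
      = 4/9 * v s + 5/27 * v (N - 2, s.2) + 10/27 * v (N, s.2) := by
  have h0' : swp s ≠ (0, 0) := fun h => h0 (by rw [← swp_swp s, h]; rfl)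
  have := eval_a12p_hi (s := swp s) hN (swp_mem hs) h0' (fun t => v (swp t)) hb
  rw [show (∑ s' ∈ ShatF N, Phat N s Lab.a22p s' * v s')
    = ∑ t ∈ ShatF N, Phat N (swp s) Lab.a12p t * v (swp t) from
      sum_swap_kernel (fun t => ker12p N (swp s) t) v] at *
  exact this

lemma eval_a0_ll (hb1 : s.1 ≤ N - 3) (hb2 : s.2 ≤ N - 3) :
    ∑ s' ∈ ShatF N, Phat N s Lab.a0 s' * v s'
      = 4/9 * v s + 1/9 * v (s.1 + 1, s.2) + 1/9 * v (s.1, s.2 + 1)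
        + 1/3 * v (s.1 + 1, s.2 + 1) := by
  obtain ⟨⟨hi1, hi2⟩, ⟨hj1, hj2⟩⟩ := ShatF_bounds hN hs h0
  have ht1 : (s.1 + 1, s.2) ∈ ShatF N := mem_F (by omega) (by omega)
  have ht2 : (s.1, s.2 + 1) ∈ ShatF N := mem_F (by omega) (by omega)
  have ht3 : (s.1 + 1, s.2 + 1) ∈ ShatF N := mem_F (by omega) (by omega)
  have hker : ∀ x, Phat N s Lab.a0 x
      = (if x = s then 4/9 else if x = (s.1 + 1, s.2) then 1/9
         else if x = (s.1, s.2 + 1) then 1/9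
         else if x = (s.1 + 1, s.2 + 1) then 1/3 else 0) := by
    intro x; simp only [Phat, ker0]; rw [if_pos ⟨hb1, hb2⟩]
  simp only [hker]
  exact sum_pt4 hs ht1 ht2 ht3 (pne₁ (by omega)) (pne₂ (by omega)) (pne₁ (by omega))
    (pne₂ (by omega)) (pne₂ (by omega)) (pne₁ (by omega)) _ _ _ _ v

lemma eval_a0_lh (hb1 : s.1 ≤ N - 3) (hb2 : s.2 = N - 2) :
    ∑ s' ∈ ShatF N, Phat N s Lab.a0 s' * v s'
      = 5/12 * v s + 1/8 * v (s.1, N) + 1/9 * v (s.1 + 1, N - 2)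
        + 25/72 * v (s.1 + 1, N) := by
  obtain ⟨⟨hi1, hi2⟩, ⟨hj1, hj2⟩⟩ := ShatF_bounds hN hs h0
  have ht1 : (s.1, N) ∈ ShatF N := mem_F (by omega) (by omega)
  have ht2 : (s.1 + 1, N - 2) ∈ ShatF N := mem_F (by omega) (by omega)
  have ht3 : (s.1 + 1, N) ∈ ShatF N := mem_F (by omega) (by omega)
  have hker : ∀ x, Phat N s Lab.a0 x
      = (if x = s then 5/12 else if x = (s.1, N) then 1/8
         else if x = (s.1 + 1, N - 2) then 1/9
         else if x = (s.1 + 1, N) then 25/72 else 0) := by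
    intro x; simp only [Phat, ker0]
    rw [if_neg (by omega), if_pos ⟨hb1, hb2⟩]
  simp only [hker]
  exact sum_pt4 hs ht1 ht2 ht3 (pne₂ (by omega)) (pne₁ (by omega)) (pne₁ (by omega))
    (pne₁ (by omega)) (pne₁ (by omega)) (pne₂ (by omega)) _ _ _ _ v

lemma eval_a0_hl (hb1 : s.1 = N - 2) (hb2 : s.2 ≤ N - 3) :
    ∑ s' ∈ ShatF N, Phat N s Lab.a0 s' * v s'
      = 5/12 * v s + 1/8 * v (N, s.2) + 1/9 * v (N - 2, s.2 + 1)
        + 25/72 * v (N, s.2 + 1) := by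
  obtain ⟨⟨hi1, hi2⟩, ⟨hj1, hj2⟩⟩ := ShatF_bounds hN hs h0
  have ht1 : (N, s.2) ∈ ShatF N := mem_F (by omega) (by omega)
  have ht2 : (N - 2, s.2 + 1) ∈ ShatF N := mem_F (by omega) (by omega)
  have ht3 : (N, s.2 + 1) ∈ ShatF N := mem_F (by omega) (by omega)
  have hker : ∀ x, Phat N s Lab.a0 x
      = (if x = s then 5/12 else if x = (N, s.2) then 1/8
         else if x = (N - 2, s.2 + 1) then 1/9
         else if x = (N, s.2 + 1) then 25/72 else 0) := by
    intro x; simp only [Phat, ker0]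
    rw [if_neg (by omega), if_neg (by omega), if_pos ⟨hb1, hb2⟩]
  simp only [hker]
  exact sum_pt4 hs ht1 ht2 ht3 (pne₁ (by omega)) (pne₂ (by omega)) (pne₂ (by omega))
    (pne₂ (by omega)) (pne₂ (by omega)) (pne₁ (by omega)) _ _ _ _ v

lemma eval_a0_hh (hb1 : s.1 = N - 2) (hb2 : s.2 = N - 2) :
    ∑ s' ∈ ShatF N, Phat N s Lab.a0 s' * v s'
      = 7/18 * v s + 1/8 * v (N, N - 2) + 1/8 * v (N - 2, N)
        + 13/36 * v (N, N) := by
  obtain ⟨⟨hi1, hi2⟩, ⟨hj1, hj2⟩⟩ := ShatF_bounds hN hs h0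
  have ht1 : (N, N - 2) ∈ ShatF N := mem_F (by omega) (by omega)
  have ht2 : (N - 2, N) ∈ ShatF N := mem_F (by omega) (by omega)
  have ht3 : (N, N) ∈ ShatF N := mem_F (by omega) (by omega)
  have hker : ∀ x, Phat N s Lab.a0 x
      = (if x = s then 7/18 else if x = (N, N - 2) then 1/8
         else if x = (N - 2, N) then 1/8
         else if x = (N, N) then 13/36 else 0) := by
    intro x; simp only [Phat, ker0]
    rw [if_neg (by omega), if_neg (by omega), if_neg (by omega), if_pos ⟨hb1, hb2⟩]
  simp only [hker]
  exact sum_pt4 hs ht1 ht2 ht3 (pne₁ (by omega)) (pne₂ (by omega)) (pne₁ (by omega))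
    (pne₁ (by omega)) (pne₂ (by omega)) (pne₁ (by omega)) _ _ _ _ v

lemma eval_atil_ii (hb1 : 3 ≤ s.1) (hb2 : 3 ≤ s.2) :
    ∑ s' ∈ ShatF N, Phat N s Lab.atil s' * v s' = v s := by
  have hker : ∀ x, Phat N s Lab.atil x = (if x = s then 1 else 0) := by
    intro x; simp only [Phat, kerTil]; rw [if_pos ⟨hb1, hb2⟩]
  simp only [hker]
  have : ∑ s' ∈ ShatF N, (if s' = s then (1:ℝ) else 0) * v s' = 1 * v s :=
    sum_pt1 hs 1 v
  rw [this, one_mul]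

lemma eval_atil_2j (hb1 : s.1 = 2) (hb2 : 3 ≤ s.2) (hb3 : s.2 ≤ N - 2) :
    ∑ s' ∈ ShatF N, Phat N s Lab.atil s' * v s'
      = 1/2 * v s + 1/2 * v (2, s.2 - 1) := by
  obtain ⟨⟨hi1, hi2⟩, ⟨hj1, hj2⟩⟩ := ShatF_bounds hN hs h0
  have ht : (2, s.2 - 1) ∈ ShatF N := mem_F (by omega) (by omega)
  have hker : ∀ x, Phat N s Lab.atil x
      = (if x = s then 1/2 else if x = (2, s.2 - 1) then 1/2 else 0) := by
    intro x; simp only [Phat, kerTil]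
    rw [if_neg (by omega), if_pos ⟨hb1, hb2⟩]
  simp only [hker]
  exact sum_pt2 hs ht (pne₂ (by omega)) _ _ v

lemma eval_atil_i2 (hb1 : 3 ≤ s.1) (hb1' : s.1 ≤ N - 2) (hb2 : s.2 = 2) :
    ∑ s' ∈ ShatF N, Phat N s Lab.atil s' * v s'
      = 1/2 * v s + 1/2 * v (s.1 - 1, 2) := by
  obtain ⟨⟨hi1, hi2⟩, ⟨hj1, hj2⟩⟩ := ShatF_bounds hN hs h0
  have ht : (s.1 - 1, 2) ∈ ShatF N := mem_F (by omega) (by omega)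
  have hker : ∀ x, Phat N s Lab.atil x
      = (if x = s then 1/2 else if x = (s.1 - 1, 2) then 1/2 else 0) := by
    intro x; simp only [Phat, kerTil]
    rw [if_neg (by omega), if_neg (by omega), if_pos ⟨hb1, hb2⟩]
  simp only [hker]
  exact sum_pt2 hs ht (pne₁ (by omega)) _ _ v

lemma eval_atil_22 (hb1 : s.1 = 2) (hb2 : s.2 = 2) :
    ∑ s' ∈ ShatF N, Phat N s Lab.atil s' * v s'
      = 1/3 * v s + 2/3 * v (0, 0) := by
  have ht : ((0 : ℕ), (0 : ℕ)) ∈ ShatF N := by rw [mem_ShatF_iff]; exact Or.inr rfl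
  have hker : ∀ x, Phat N s Lab.atil x
      = (if x = s then 1/3 else if x = ((0 : ℕ), (0 : ℕ)) then 2/3 else 0) := by
    intro x; simp only [Phat, kerTil]
    rw [if_neg (by omega), if_neg (by omega), if_neg (by omega), if_pos ⟨hb1, hb2⟩]
  simp only [hker]
  exact sum_pt2 hs ht (pne₂ (by omega)) _ _ v

end Eval

/-! ### Admissibility facts, row sums, comparison -/

lemma Phat_nonneg (N : ℕ) (s : ℕ × ℕ) (a : Lab) (s' : ℕ × ℕ) :
    0 ≤ Phat N s a s' := by
  cases a <;> simp only [Phat, ker11, ker12, ker11p, ker12p, ker0, kerTil] <;>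
    split_ifs <;> norm_num

lemma ok_zero (N : ℕ) (s : ℕ × ℕ) : ActOK N s Lab.zero := by
  unfold ActOK; split
  · rfl
  · trivial

lemma ok_zero' (N : ℕ) (s : ℕ × ℕ) : ActOK' N s Lab.zero := Or.inl (ok_zero N s)

lemma ok_ne {N : ℕ} {s : ℕ × ℕ} {a : Lab} (hN : 7 ≤ N) (ha : ActOK' N s a)
    (hz : a ≠ Lab.zero) : ¬(s = (0, 0) ∨ s = (N, N)) := by
  intro h
  rcases ha with hA | ⟨h2, -⟩ | ⟨h2, -⟩ | ⟨h2, -⟩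
  · unfold ActOK at hA; rw [if_pos h] at hA; exact hz hA
  · rcases h with h | h <;> subst h <;> simp at h2 <;> omega
  · rcases h with h | h <;> subst h <;> simp at h2 <;> omega
  · rcases h with h | h <;> rw [h] at h2 <;> simp [Prod.ext_iff] at h2 <;> omega

lemma ok_a11 {N : ℕ} {s : ℕ × ℕ} (hN : 7 ≤ N) (ha : ActOK' N s Lab.a11) :
    s.2 ≤ N - 2 := by
  have hne := ok_ne hN ha (by simp)
  rcases ha with hA | ⟨-, h | h⟩ | ⟨-, h | h⟩ | ⟨hD, -⟩
  · unfold ActOK at hA; rw [if_neg hne] at hA; exact hA.2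
  · exact h.2.2
  · exact absurd h.1 (by simp)
  · exact absurd h.1 (by simp)
  · exact absurd h.1 (by simp)
  · rw [hD]; omega

lemma ok_a12 {N : ℕ} {s : ℕ × ℕ} (hN : 7 ≤ N) (ha : ActOK' N s Lab.a12) :
    s.2 ≤ N - 3 := by
  have hne := ok_ne hN ha (by simp)
  rcases ha with hA | ⟨-, h | h⟩ | ⟨-, h | h⟩ | ⟨hD, -⟩
  · unfold ActOK at hA; rw [if_neg hne] at hA; exact hA.2
  · exact absurd h.1 (by simp)
  · exact h.2.2
  · exact absurd h.1 (by simp)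
  · exact absurd h.1 (by simp)
  · rw [hD]; omega

lemma ok_a21 {N : ℕ} {s : ℕ × ℕ} (hN : 7 ≤ N) (ha : ActOK' N s Lab.a21) :
    s.1 ≤ N - 2 := by
  have hne := ok_ne hN ha (by simp)
  rcases ha with hA | ⟨-, h | h⟩ | ⟨-, h | h⟩ | ⟨hD, -⟩
  · unfold ActOK at hA; rw [if_neg hne] at hA; exact hA.2
  · exact absurd h.1 (by simp)
  · exact absurd h.1 (by simp)
  · exact h.2.2
  · exact absurd h.1 (by simp)
  · rw [hD]; omega

lemma ok_a22 {N : ℕ} {s : ℕ × ℕ} (hN : 7 ≤ N) (ha : ActOK' N s Lab.a22) :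
    s.1 ≤ N - 3 := by
  have hne := ok_ne hN ha (by simp)
  rcases ha with hA | ⟨-, h | h⟩ | ⟨-, h | h⟩ | ⟨hD, -⟩
  · unfold ActOK at hA; rw [if_neg hne] at hA; exact hA.2
  · exact absurd h.1 (by simp)
  · exact absurd h.1 (by simp)
  · exact absurd h.1 (by simp)
  · exact h.2.2
  · rw [hD]; omega

lemma ok_only {N : ℕ} {s : ℕ × ℕ} {a : Lab} (ha : ActOK' N s a)
    (h1 : a ≠ Lab.a11) (h2 : a ≠ Lab.a12) (h3 : a ≠ Lab.a21) (h4 : a ≠ Lab.a22) :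
    ActOK N s a := by
  rcases ha with hA | ⟨-, h | h⟩ | ⟨-, h | h⟩ | ⟨-, h | h | h | h⟩
  · exact hA
  · exact absurd h.1 h1
  · exact absurd h.1 h2
  · exact absurd h.1 h3
  · exact absurd h.1 h4
  · exact absurd h h1
  · exact absurd h h2
  · exact absurd h h3
  · exact absurd h h4

lemma ok_a11p {N : ℕ} {s : ℕ × ℕ} (hN : 7 ≤ N) (ha : ActOK' N s Lab.a11p) :
    s.2 ≤ N - 2 := by
  have hne := ok_ne hN ha (by simp)
  have hA := ok_only ha (by simp) (by simp) (by simp) (by simp)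
  unfold ActOK at hA; rw [if_neg hne] at hA; exact hA.2

lemma ok_a12p {N : ℕ} {s : ℕ × ℕ} (hN : 7 ≤ N) (ha : ActOK' N s Lab.a12p) :
    s.2 ≤ N - 3 := by
  have hne := ok_ne hN ha (by simp)
  have hA := ok_only ha (by simp) (by simp) (by simp) (by simp)
  unfold ActOK at hA; rw [if_neg hne] at hA; exact hA.2

lemma ok_a21p {N : ℕ} {s : ℕ × ℕ} (hN : 7 ≤ N) (ha : ActOK' N s Lab.a21p) :
    s.1 ≤ N - 2 := by
  have hne := ok_ne hN ha (by simp)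
  have hA := ok_only ha (by simp) (by simp) (by simp) (by simp)
  unfold ActOK at hA; rw [if_neg hne] at hA; exact hA.2

lemma ok_a22p {N : ℕ} {s : ℕ × ℕ} (hN : 7 ≤ N) (ha : ActOK' N s Lab.a22p) :
    s.1 ≤ N - 3 := by
  have hne := ok_ne hN ha (by simp)
  have hA := ok_only ha (by simp) (by simp) (by simp) (by simp)
  unfold ActOK at hA; rw [if_neg hne] at hA; exact hA.2

lemma ok_a0 {N : ℕ} {s : ℕ × ℕ} (hN : 7 ≤ N) (ha : ActOK' N s Lab.a0) :
    s.1 ≤ N - 2 ∧ s.2 ≤ N - 2 := by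
  have hne := ok_ne hN ha (by simp)
  have hA := ok_only ha (by simp) (by simp) (by simp) (by simp)
  unfold ActOK at hA; rw [if_neg hne] at hA; exact hA

lemma ok_atil {N : ℕ} {s : ℕ × ℕ} (hN : 7 ≤ N) (ha : ActOK' N s Lab.atil) :
    s.1 ≤ N - 2 ∧ s.2 ≤ N - 2 := by
  have hne := ok_ne hN ha (by simp)
  have hA := ok_only ha (by simp) (by simp) (by simp) (by simp)
  unfold ActOK at hA; rw [if_neg hne] at hA; exact hA

lemma rowsum {N : ℕ} {s : ℕ × ℕ} {a : Lab} (hN : 7 ≤ N) (hs : s ∈ ShatF N)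
    (ha : ActOK' N s a) : ∑ s' ∈ ShatF N, Phat N s a s' = 1 := by
  have key : ∑ s' ∈ ShatF N, Phat N s a s'
      = ∑ s' ∈ ShatF N, Phat N s a s' * (fun _ => (1 : ℝ)) s' := by simp
  rw [key]
  cases a with
  | zero => rw [eval_zero hs]
  | a11 =>
    have h2 := ok_a11 hN ha
    have hne := ok_ne hN ha (by simp); push_neg at hne
    rcases Nat.lt_or_ge s.2 (N - 2) with h | h
    · rw [eval_a11_lo hN hs hne.1 _ (by omega)]; norm_num
    · rw [eval_a11_hi hN hs hne.1 _ (by omega)]; norm_num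
  | a11p =>
    have h2 := ok_a11p hN ha
    have hne := ok_ne hN ha (by simp); push_neg at hne
    rcases Nat.lt_or_ge s.2 (N - 2) with h | h
    · rw [eval_a11p_lo hN hs hne.1 _ (by omega)]; norm_num
    · rw [eval_a11p_hi hN hs hne.1 _ (by omega)]; norm_num
  | a12 =>
    have h2 := ok_a12 hN ha
    have hne := ok_ne hN ha (by simp); push_neg at hne
    rcases Nat.lt_or_ge s.2 (N - 3) with h | h
    · rw [eval_a12_lo hN hs hne.1 _ (by omega)]; norm_num
    · rw [eval_a12_hi hN hs hne.1 _ (by omega)]; norm_num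
  | a12p =>
    have h2 := ok_a12p hN ha
    have hne := ok_ne hN ha (by simp); push_neg at hne
    rcases Nat.lt_or_ge s.2 (N - 3) with h | h
    · rw [eval_a12p_lo hN hs hne.1 _ (by omega)]; norm_num
    · rw [eval_a12p_hi hN hs hne.1 _ (by omega)]; norm_num
  | a21 =>
    have h2 := ok_a21 hN ha
    have hne := ok_ne hN ha (by simp); push_neg at hne
    rcases Nat.lt_or_ge s.1 (N - 2) with h | h
    · rw [eval_a21_lo hN hs hne.1 _ (by omega)]; norm_num
    · rw [eval_a21_hi hN hs hne.1 _ (by omega)]; norm_num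
  | a21p =>
    have h2 := ok_a21p hN ha
    have hne := ok_ne hN ha (by simp); push_neg at hne
    rcases Nat.lt_or_ge s.1 (N - 2) with h | h
    · rw [eval_a21p_lo hN hs hne.1 _ (by omega)]; norm_num
    · rw [eval_a21p_hi hN hs hne.1 _ (by omega)]; norm_num
  | a22 =>
    have h2 := ok_a22 hN ha
    have hne := ok_ne hN ha (by simp); push_neg at hne
    rcases Nat.lt_or_ge s.1 (N - 3) with h | h
    · rw [eval_a22_lo hN hs hne.1 _ (by omega)]; norm_num
    · rw [eval_a22_hi hN hs hne.1 _ (by omega)]; norm_num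
  | a22p =>
    have h2 := ok_a22p hN ha
    have hne := ok_ne hN ha (by simp); push_neg at hne
    rcases Nat.lt_or_ge s.1 (N - 3) with h | h
    · rw [eval_a22p_lo hN hs hne.1 _ (by omega)]; norm_num
    · rw [eval_a22p_hi hN hs hne.1 _ (by omega)]; norm_num
  | a0 =>
    have h2 := ok_a0 hN ha
    have hne := ok_ne hN ha (by simp); push_neg at hne
    rcases Nat.lt_or_ge s.1 (N - 2) with h | h <;>
      rcases Nat.lt_or_ge s.2 (N - 2) with h' | h'
    · rw [eval_a0_ll hN hs hne.1 _ (by omega) (by omega)]; norm_num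
    · rw [eval_a0_lh hN hs hne.1 _ (by omega) (by omega)]; norm_num
    · rw [eval_a0_hl hN hs hne.1 _ (by omega) (by omega)]; norm_num
    · rw [eval_a0_hh hN hs hne.1 _ (by omega) (by omega)]; norm_num
  | atil =>
    have h2 := ok_atil hN ha
    have hne := ok_ne hN ha (by simp); push_neg at hne
    obtain ⟨⟨hi1, hi2⟩, ⟨hj1, hj2⟩⟩ := ShatF_bounds hN hs hne.1
    rcases Nat.lt_or_ge s.1 3 with h | h <;> rcases Nat.lt_or_ge s.2 3 with h' | h'
    · rw [eval_atil_22 hN hs hne.1 _ (by omega) (by omega)]; norm_num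
    · rw [eval_atil_2j hN hs hne.1 _ (by omega) (by omega) (by omega)]; norm_num
    · rw [eval_atil_i2 hN hs hne.1 _ (by omega) (by omega) (by omega)]; norm_num
    · rw [eval_atil_ii hN hs hne.1 _ (by omega) (by omega)]

lemma ShatF_nonempty {N : ℕ} (hN : 7 ≤ N) : (ShatF N).Nonempty :=
  ⟨(N, N), mem_F (Or.inr rfl) (Or.inr rfl)⟩

lemma sum_abs_le {N : ℕ} {s : ℕ × ℕ} {a : Lab} (hN : 7 ≤ N) (hs : s ∈ ShatF N)
    (ha : ActOK' N s a) {u : ℕ × ℕ → ℝ} {C : ℝ}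
    (hu : ∀ x ∈ ShatF N, |u x| ≤ C) :
    |∑ s' ∈ ShatF N, Phat N s a s' * u s'| ≤ C := by
  calc |∑ s' ∈ ShatF N, Phat N s a s' * u s'|
      ≤ ∑ s' ∈ ShatF N, |Phat N s a s' * u s'| := Finset.abs_sum_le_sum_abs _ _
    _ = ∑ s' ∈ ShatF N, Phat N s a s' * |u s'| := by
        refine Finset.sum_congr rfl fun x _ => ?_
        rw [abs_mul, abs_of_nonneg (Phat_nonneg N s a x)]
    _ ≤ ∑ s' ∈ ShatF N, Phat N s a s' * C :=
        Finset.sum_le_sum fun x hx =>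
          mul_le_mul_of_nonneg_left (hu x hx) (Phat_nonneg N s a x)
    _ = C := by rw [← Finset.sum_mul, rowsum hN hs ha, one_mul]

/-- The fundamental comparison lemma: a subsolution is dominated by a
supersolution of the same evaluation equations. -/
lemma comp_le {N : ℕ} {lam : ℝ} (hN : 7 ≤ N) (hl0 : 0 < lam) (hl1 : lam < 1)
    {d : ℕ × ℕ → Lab} (hd : ∀ s ∈ ShatF N, ActOK' N s (d s))
    {u w : ℕ × ℕ → ℝ}
    (hu : ∀ s ∈ ShatF N,
      u s ≤ rhat N s + lam * ∑ s' ∈ ShatF N, Phat N s (d s) s' * u s')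
    (hw : ∀ s ∈ ShatF N,
      rhat N s + lam * ∑ s' ∈ ShatF N, Phat N s (d s) s' * w s' ≤ w s) :
    ∀ s ∈ ShatF N, u s ≤ w s := by
  have hne := ShatF_nonempty hN
  set g : ℕ × ℕ → ℝ := fun s => u s - w s with hg
  obtain ⟨s0, hs0, hmax⟩ := Finset.exists_mem_eq_sup' hne g
  set M := (ShatF N).sup' hne g with hM
  suffices hM0 : M ≤ 0 by
    intro s hs
    have h1 : g s ≤ M := Finset.le_sup' g hs
    have : u s - w s ≤ 0 := le_trans h1 hM0
    linarith
  by_contra hM0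
  push_neg at hM0
  have hA := hu s0 hs0
  have hB := hw s0 hs0
  have hsum : ∑ s' ∈ ShatF N, Phat N s0 (d s0) s' * u s'
      - ∑ s' ∈ ShatF N, Phat N s0 (d s0) s' * w s'
      = ∑ s' ∈ ShatF N, Phat N s0 (d s0) s' * g s' := by
    rw [← Finset.sum_sub_distrib]
    exact Finset.sum_congr rfl fun x _ => by rw [hg]; ring
  have h2 : ∑ s' ∈ ShatF N, Phat N s0 (d s0) s' * g s' ≤ M := by
    calc ∑ s' ∈ ShatF N, Phat N s0 (d s0) s' * g s'
        ≤ ∑ s' ∈ ShatF N, Phat N s0 (d s0) s' * M :=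
          Finset.sum_le_sum fun x hx =>
            mul_le_mul_of_nonneg_left (Finset.le_sup' g hx) (Phat_nonneg N s0 _ x)
      _ = M := by rw [← Finset.sum_mul, rowsum hN hs0 (hd s0 hs0), one_mul]
  have h3 : u s0 - w s0 ≤ lam * M := by
    have e1 : lam * (∑ s' ∈ ShatF N, Phat N s0 (d s0) s' * u s'
        - ∑ s' ∈ ShatF N, Phat N s0 (d s0) s' * w s')
        = lam * ∑ s' ∈ ShatF N, Phat N s0 (d s0) s' * u s'
          - lam * ∑ s' ∈ ShatF N, Phat N s0 (d s0) s' * w s' := by ring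
    have e2 : lam * (∑ s' ∈ ShatF N, Phat N s0 (d s0) s' * g s') ≤ lam * M :=
      mul_le_mul_of_nonneg_left h2 hl0.le
    rw [hsum] at e1
    linarith
  have h4 : g s0 = M := hmax.symm
  have h5 : M ≤ lam * M := by
    have h6 : g s0 ≤ lam * M := h3
    rwa [h4] at h6
  nlinarith

lemma value_nonneg {N : ℕ} {lam : ℝ} (hN : 7 ≤ N) (hl0 : 0 < lam) (hl1 : lam < 1)
    {d : ℕ × ℕ → Lab} (hd : ∀ s ∈ ShatF N, ActOK' N s (d s))
    {v : ℕ × ℕ → ℝ} (hv : IsValue N lam d v) :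
    ∀ s ∈ ShatF N, 0 ≤ v s := by
  have := comp_le hN hl0 hl1 hd (u := fun _ => 0) (w := v) ?_ ?_
  · exact this
  · intro s hs
    have h1 : (0:ℝ) ≤ rhat N s := by unfold rhat; split <;> norm_num
    simpa using h1
  · intro s hs; exact le_of_eq (hv s hs).symm

lemma value_unique {N : ℕ} {lam : ℝ} (hN : 7 ≤ N) (hl0 : 0 < lam) (hl1 : lam < 1)
    {d : ℕ × ℕ → Lab} (hd : ∀ s ∈ ShatF N, ActOK' N s (d s))
    {v w : ℕ × ℕ → ℝ} (hv : IsValue N lam d v) (hw : IsValue N lam d w) :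
    ∀ s ∈ ShatF N, v s = w s := by
  intro s hs
  have h1 := comp_le hN hl0 hl1 hd (u := v) (w := w)
    (fun s hs => le_of_eq (hv s hs)) (fun s hs => le_of_eq (hw s hs).symm) s hs
  have h2 := comp_le hN hl0 hl1 hd (u := w) (w := v)
    (fun s hs => le_of_eq (hw s hs)) (fun s hs => le_of_eq (hv s hs).symm) s hs
  linarith

/-! ### Fixed points: existence of value functions and of the optimal value -/

noncomputable def emb (N : ℕ) (f : ↥(ShatF N) → ℝ) : ℕ × ℕ → ℝ :=
  fun s => if h : s ∈ ShatF N then f ⟨s, h⟩ else 0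

lemma emb_abs_le {N : ℕ} (f g : ↥(ShatF N) → ℝ) :
    ∀ x ∈ ShatF N, |emb N f x - emb N g x| ≤ dist f g := by
  intro x hx
  unfold emb
  rw [dif_pos hx, dif_pos hx, ← Real.dist_eq]
  exact dist_le_pi_dist f g ⟨x, hx⟩

lemma exists_fixed {N : ℕ} {lam : ℝ} (hl0 : 0 < lam) (hl1 : lam < 1)
    (T : (↥(ShatF N) → ℝ) → (↥(ShatF N) → ℝ))
    (hT : ∀ f g x, dist (T f x) (T g x) ≤ lam * dist f g) :
    ∃ w, T w = w := by
  have hK1 : (⟨lam, hl0.le⟩ : NNReal) < 1 := by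
    exact NNReal.coe_lt_coe.mp hl1
  have hL : LipschitzWith ⟨lam, hl0.le⟩ T := by
    apply LipschitzWith.of_dist_le_mul
    intro f g
    rw [dist_pi_le_iff (by positivity)]
    intro x
    exact hT f g x
  have hC : ContractingWith ⟨lam, hl0.le⟩ T := ⟨hK1, hL⟩
  exact ⟨ContractingWith.fixedPoint T hC, hC.fixedPoint_isFixedPt⟩

lemma exists_value' {N : ℕ} {lam : ℝ} (hN : 7 ≤ N) (hl0 : 0 < lam) (hl1 : lam < 1)
    {d : ℕ × ℕ → Lab} (hd : ∀ s ∈ ShatF N, ActOK' N s (d s)) :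
    ∃ v : ℕ × ℕ → ℝ, IsValue N lam d v := by
  set T : (↥(ShatF N) → ℝ) → (↥(ShatF N) → ℝ) := fun f x =>
    rhat N x.1 + lam * ∑ s' ∈ ShatF N, Phat N x.1 (d x.1) s' * emb N f s' with hTdef
  have hT : ∀ f g x, dist (T f x) (T g x) ≤ lam * dist f g := by
    intro f g x
    have hx : (x : ℕ × ℕ) ∈ ShatF N := x.2
    have e : T f x - T g x
        = lam * ∑ s' ∈ ShatF N, Phat N x.1 (d x.1) s' * (emb N f s' - emb N g s') := by
      simp only [hTdef, mul_sub, Finset.sum_sub_distrib]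
      ring
    rw [Real.dist_eq, e, abs_mul, abs_of_pos hl0]
    apply mul_le_mul_of_nonneg_left _ hl0.le
    exact sum_abs_le hN hx (hd _ hx) (emb_abs_le f g)
  obtain ⟨w, hw⟩ := exists_fixed hl0 hl1 T hT
  refine ⟨emb N w, ?_⟩
  intro s hs
  have h1 : emb N w s = w ⟨s, hs⟩ := by unfold emb; rw [dif_pos hs]
  have h2 : T w ⟨s, hs⟩ = w ⟨s, hs⟩ := congrFun hw ⟨s, hs⟩
  rw [h1, ← h2]

def Acts (N : ℕ) (s : ℕ × ℕ) : Finset Lab :=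
  Finset.univ.filter (fun a => ActOK' N s a)

lemma mem_Acts {N : ℕ} {s : ℕ × ℕ} {a : Lab} : a ∈ Acts N s ↔ ActOK' N s a := by
  unfold Acts; simp

lemma Acts_ne (N : ℕ) (s : ℕ × ℕ) : (Acts N s).Nonempty :=
  ⟨Lab.zero, mem_Acts.2 (ok_zero' N s)⟩

lemma abs_sup'_sub {α : Type*} {F : Finset α} (hne : F.Nonempty) (f g : α → ℝ)
    {C : ℝ} (h : ∀ a ∈ F, |f a - g a| ≤ C) :
    |F.sup' hne f - F.sup' hne g| ≤ C := by
  rw [abs_sub_le_iff]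
  constructor
  · rw [sub_le_iff_le_add]
    apply Finset.sup'_le
    intro a ha
    have h1 := (abs_sub_le_iff.1 (h a ha)).1
    have h2 := Finset.le_sup' g ha
    linarith
  · rw [sub_le_iff_le_add]
    apply Finset.sup'_le
    intro a ha
    have h1 := (abs_sub_le_iff.1 (h a ha)).2
    have h2 := Finset.le_sup' f ha
    linarith

lemma exists_opt {N : ℕ} {lam : ℝ} (hN : 7 ≤ N) (hl0 : 0 < lam) (hl1 : lam < 1) :
    ∃ v : ℕ × ℕ → ℝ, ∀ s, s ∈ ShatF N →
      v s = (Acts N s).sup' (Acts_ne N s)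
        (fun a => rhat N s + lam * ∑ s' ∈ ShatF N, Phat N s a s' * v s') := by
  set T : (↥(ShatF N) → ℝ) → (↥(ShatF N) → ℝ) := fun f x =>
    (Acts N x.1).sup' (Acts_ne N x.1)
      (fun a => rhat N x.1 + lam * ∑ s' ∈ ShatF N, Phat N x.1 a s' * emb N f s')
    with hTdef
  have hT : ∀ f g x, dist (T f x) (T g x) ≤ lam * dist f g := by
    intro f g x
    have hx : (x : ℕ × ℕ) ∈ ShatF N := x.2
    rw [Real.dist_eq]
    apply abs_sup'_sub
    intro a ha
    have e : (rhat N x.1 + lam * ∑ s' ∈ ShatF N, Phat N x.1 a s' * emb N f s')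
        - (rhat N x.1 + lam * ∑ s' ∈ ShatF N, Phat N x.1 a s' * emb N g s')
        = lam * ∑ s' ∈ ShatF N, Phat N x.1 a s' * (emb N f s' - emb N g s') := by
      simp only [mul_sub, Finset.sum_sub_distrib]
      ring
    rw [e, abs_mul, abs_of_pos hl0]
    apply mul_le_mul_of_nonneg_left _ hl0.le
    exact sum_abs_le hN hx (mem_Acts.1 ha) (emb_abs_le f g)
  obtain ⟨w, hw⟩ := exists_fixed hl0 hl1 T hT
  refine ⟨emb N w, ?_⟩
  intro s hs
  have h1 : emb N w s = w ⟨s, hs⟩ := by unfold emb; rw [dif_pos hs]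
  have h2 : T w ⟨s, hs⟩ = w ⟨s, hs⟩ := congrFun hw ⟨s, hs⟩
  rw [h1, ← h2]

set_option maxHeartbeats 4000000 in
/-- if in the extended MDP no optimal decision rule ever uses the
added unprimed actions at the boundary states, then in the auxiliary MDP no
optimal decision rule ever uses the corresponding primed actions there. -/
theorem primed_excluded_of_extended (N : ℕ) (hN : 7 ≤ N)
    (lam : ℝ) (hl0 : 0 < lam) (hl1 : lam < 1)
    (hext : ∀ d : ℕ × ℕ → Lab, IsOptimal' N lam d →
      (∀ j : ℕ, 3 ≤ j → j ≤ N - 3 → d (2, j) ≠ Lab.a11 ∧ d (2, j) ≠ Lab.a12) ∧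
      (d (2, N - 2) ≠ Lab.a11) ∧
      (∀ i : ℕ, 3 ≤ i → i ≤ N - 3 → d (i, 2) ≠ Lab.a21 ∧ d (i, 2) ≠ Lab.a22) ∧
      (d (N - 2, 2) ≠ Lab.a21) ∧
      (d (2, 2) ≠ Lab.a11 ∧ d (2, 2) ≠ Lab.a12 ∧ d (2, 2) ≠ Lab.a21 ∧
        d (2, 2) ≠ Lab.a22)) :
    ∀ d : ℕ × ℕ → Lab, IsOptimal N lam d →
      (∀ j : ℕ, 3 ≤ j → j ≤ N - 3 → d (2, j) ≠ Lab.a11p ∧ d (2, j) ≠ Lab.a12p) ∧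
      (d (2, N - 2) ≠ Lab.a11p) ∧
      (∀ i : ℕ, 3 ≤ i → i ≤ N - 3 → d (i, 2) ≠ Lab.a21p ∧ d (i, 2) ≠ Lab.a22p) ∧
      (d (N - 2, 2) ≠ Lab.a21p) ∧
      (d (2, 2) ≠ Lab.a11p ∧ d (2, 2) ≠ Lab.a12p ∧ d (2, 2) ≠ Lab.a21p ∧
        d (2, 2) ≠ Lab.a22p) := by
  intro d hdopt
  obtain ⟨hdrule, hddom⟩ := hdopt
  -- the optimal value function of the extended MDP
  obtain ⟨vstar, hvstar⟩ := exists_opt hN hl0 hl1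
  have hsel : ∀ s : ℕ × ℕ, ∃ a : Lab, ActOK' N s a ∧ (s ∈ ShatF N →
      vstar s = rhat N s + lam * ∑ s' ∈ ShatF N, Phat N s a s' * vstar s') := by
    intro s
    by_cases hs : s ∈ ShatF N
    · obtain ⟨a, ha, he⟩ := Finset.exists_mem_eq_sup' (Acts_ne N s)
        (fun a => rhat N s + lam * ∑ s' ∈ ShatF N, Phat N s a s' * vstar s')
      exact ⟨a, mem_Acts.1 ha, fun _ => (hvstar s hs).trans he⟩
    · exact ⟨Lab.zero, ok_zero' N s, fun h => absurd h hs⟩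
  choose dstar hd1 hd2 using hsel
  have hvalstar : IsValue N lam dstar vstar := fun s hs => hd2 s hs
  have hBell : ∀ s ∈ ShatF N, ∀ a, ActOK' N s a →
      rhat N s + lam * ∑ s' ∈ ShatF N, Phat N s a s' * vstar s' ≤ vstar s := by
    intro s hs a ha
    rw [hvstar s hs]
    exact Finset.le_sup'
      (fun a : Lab => rhat N s + lam * ∑ s' ∈ ShatF N, Phat N s a s' * vstar s')
      (mem_Acts.2 ha)
  -- the greedy rule is optimal in the extended MDP
  have hstaropt : IsOptimal' N lam dstar := by
    refine ⟨fun s _ => hd1 s, ?_⟩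
    intro vd hvd d' hd' v' hv' s hsP
    have hsF : s ∈ ShatF N := mem_ShatF_iff.2 hsP
    have hd'F : ∀ x ∈ ShatF N, ActOK' N x (d' x) :=
      fun x hx => hd' x (mem_ShatF_iff.1 hx)
    have h1 : v' s ≤ vstar s :=
      comp_le hN hl0 hl1 hd'F (fun x hx => le_of_eq (hv' x hx))
        (fun x hx => hBell x hx _ (hd'F x hx)) s hsF
    have h2 : vstar s = vd s :=
      value_unique hN hl0 hl1 (fun x _ => hd1 x) hvalstar hvd s hsF
    linarith
  have hD := hext dstar hstaropt
  -- hence the greedy rule is a rule of the auxiliary MDP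
  have hruleAux : IsRule N dstar := by
    intro s hsP
    rcases hd1 s with hA | ⟨h2, ⟨he, h3, h4⟩ | ⟨he, h3, h4⟩⟩ |
      ⟨h2, ⟨he, h3, h4⟩ | ⟨he, h3, h4⟩⟩ | ⟨h2, he | he | he | he⟩
    · exact hA
    · exfalso
      have hseq : s = (2, s.2) := Prod.ext h2 rfl
      rcases Nat.lt_or_ge s.2 (N - 2) with hc | hc
      · exact (hD.1 s.2 h3 (by omega)).1 (by rw [← hseq]; exact he)
      · have hseq2 : s = (2, N - 2) := Prod.ext h2 (by omega)
        exact hD.2.1 (by rw [← hseq2]; exact he)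
    · exfalso
      have hseq : s = (2, s.2) := Prod.ext h2 rfl
      exact (hD.1 s.2 h3 h4).2 (by rw [← hseq]; exact he)
    · exfalso
      have hseq : s = (s.1, 2) := Prod.ext rfl h2
      rcases Nat.lt_or_ge s.1 (N - 2) with hc | hc
      · exact (hD.2.2.1 s.1 h3 (by omega)).1 (by rw [← hseq]; exact he)
      · have hseq2 : s = (N - 2, 2) := Prod.ext (by omega) h2
        exact hD.2.2.2.1 (by rw [← hseq2]; exact he)
    · exfalso
      have hseq : s = (s.1, 2) := Prod.ext rfl h2
      exact (hD.2.2.1 s.1 h3 h4).2 (by rw [← hseq]; exact he)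
    · exact absurd (by rw [← h2]; exact he) hD.2.2.2.2.1
    · exact absurd (by rw [← h2]; exact he) hD.2.2.2.2.2.1
    · exact absurd (by rw [← h2]; exact he) hD.2.2.2.2.2.2.1
    · exact absurd (by rw [← h2]; exact he) hD.2.2.2.2.2.2.2
  -- the value function of d agrees with the optimal value of the extended MDP
  have hdF' : ∀ x ∈ ShatF N, ActOK' N x (d x) :=
    fun x hx => Or.inl (hdrule x (mem_ShatF_iff.1 hx))
  obtain ⟨vd, hvd⟩ := exists_value' hN hl0 hl1 hdF'
  have hdomdown : ∀ x ∈ ShatF N, vstar x ≤ vd x := fun x hx =>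
    hddom vd hvd dstar hruleAux vstar hvalstar x (mem_ShatF_iff.1 hx)
  have hdomup : ∀ x ∈ ShatF N, vd x ≤ vstar x :=
    comp_le hN hl0 hl1 hdF' (fun x hx => le_of_eq (hvd x hx))
      (fun x hx => hBell x hx _ (hdF' x hx))
  have heq : ∀ x ∈ ShatF N, vd x = vstar x :=
    fun x hx => le_antisymm (hdomup x hx) (hdomdown x hx)
  have hnn : ∀ x ∈ ShatF N, 0 ≤ vd x := value_nonneg hN hl0 hl1 hdF' hvd
  have hQle : ∀ s ∈ ShatF N, ∀ a, ActOK' N s a →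
      rhat N s + lam * ∑ s' ∈ ShatF N, Phat N s a s' * vd s' ≤ vd s := by
    intro s hs a ha
    have e : ∑ s' ∈ ShatF N, Phat N s a s' * vd s'
        = ∑ s' ∈ ShatF N, Phat N s a s' * vstar s' :=
      Finset.sum_congr rfl fun x hx => by rw [heq x hx]
    rw [e, heq s hs]
    exact hBell s hs a ha
  -- forbidden actions are strictly suboptimal
  have hQlt : ∀ s ∈ ShatF N, ∀ a, ActOK' N s a →
      (∀ e : ℕ × ℕ → Lab, IsOptimal' N lam e → e s ≠ a) →
      rhat N s + lam * ∑ s' ∈ ShatF N, Phat N s a s' * vd s' < vd s := by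
    intro s hs a ha hforb
    rcases lt_or_eq_of_le (hQle s hs a ha) with h | h
    · exact h
    exfalso
    set e : ℕ × ℕ → Lab := fun x => if x = s then a else dstar x with hedef
    have herule : IsRule' N e := by
      intro x _
      by_cases hx : x = s
      · subst hx; simp only [hedef, if_pos rfl]; exact ha
      · simp only [hedef, if_neg hx]; exact hd1 x
    have heval : IsValue N lam e vstar := by
      intro x hx
      by_cases hxs : x = s
      · subst hxs
        simp only [hedef, if_pos rfl]
        have e2 : ∑ s' ∈ ShatF N, Phat N x a s' * vd s'
            = ∑ s' ∈ ShatF N, Phat N x a s' * vstar s' :=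
          Finset.sum_congr rfl fun y hy => by rw [heq y hy]
        rw [← heq x hx, ← e2]
        exact h.symm
      · simp only [hedef, if_neg hxs]
        exact hvalstar x hx
    have heopt : IsOptimal' N lam e := by
      refine ⟨herule, ?_⟩
      intro vd' hvd' d' hd' v' hv' x hxP
      have hxF : x ∈ ShatF N := mem_ShatF_iff.2 hxP
      have hd'F : ∀ y ∈ ShatF N, ActOK' N y (d' y) :=
        fun y hy => hd' y (mem_ShatF_iff.1 hy)
      have h1 : v' x ≤ vstar x :=
        comp_le hN hl0 hl1 hd'F (fun y hy => le_of_eq (hv' y hy))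
          (fun y hy => hBell y hy _ (hd'F y hy)) x hxF
      have h2 : vstar x = vd' x :=
        value_unique hN hl0 hl1 (fun y hy => herule y (mem_ShatF_iff.1 hy))
          heval hvd' x hxF
      linarith
    exact hforb e heopt (by simp only [hedef, if_pos rfl])
  -- endgame: rule out each primed action
  refine ⟨?_, ?_, ?_, ?_, ?_, ?_, ?_, ?_⟩
  · -- (2, j) for 3 ≤ j ≤ N - 3
    intro j h3 hj
    have hsF : ((2 : ℕ), j) ∈ ShatF N := mem_F (by omega) (by omega)
    have h00 : ((2 : ℕ), j) ≠ ((0 : ℕ), (0 : ℕ)) := pne₁ (show (2 : ℕ) ≠ 0 by omega)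
    have hrz : rhat N (2, j) = 0 := rhat_ne (pne₁ (show (2 : ℕ) ≠ N by omega))
    have hge := hnn (2, j) hsF
    have hlam : lam * vd (2, j) ≤ vd (2, j) := by nlinarith [hge, hl1]
    constructor
    · intro hda
      have hveq := hvd (2, j) hsF
      rw [hda, eval_a11p_lo hN hsF h00 vd (show j ≤ N - 3 by omega), hrz] at hveq
      have hstr := hQlt (2, j) hsF Lab.a11
        (Or.inr (Or.inl ⟨rfl, Or.inl ⟨rfl, (show 3 ≤ j from h3),
          (show j ≤ N - 2 by omega)⟩⟩))
        (fun e he => ((hext e he).1 j h3 hj).1)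
      rw [eval_a11_lo hN hsF h00 vd (show j ≤ N - 3 by omega), hrz] at hstr
      dsimp only at hveq hstr
      ring_nf at hveq hstr hlam
      linarith
    · intro hda
      rcases Nat.lt_or_ge j (N - 3) with hc | hc
      · -- j ≤ N - 4
        have hveq := hvd (2, j) hsF
        rw [hda, eval_a12p_lo hN hsF h00 vd (show j ≤ N - 4 by omega), hrz] at hveq
        have hstr1 := hQlt (2, j) hsF Lab.a12
          (Or.inr (Or.inl ⟨rfl, Or.inr ⟨rfl, (show 3 ≤ j from h3),
            (show j ≤ N - 3 by omega)⟩⟩))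
          (fun e he => ((hext e he).1 j h3 hj).2)
        rw [eval_a12_lo hN hsF h00 vd (show j ≤ N - 4 by omega), hrz] at hstr1
        have hstr2 := hQlt (2, j) hsF Lab.a11
          (Or.inr (Or.inl ⟨rfl, Or.inl ⟨rfl, (show 3 ≤ j from h3),
            (show j ≤ N - 2 by omega)⟩⟩))
          (fun e he => ((hext e he).1 j h3 hj).1)
        rw [eval_a11_lo hN hsF h00 vd (show j ≤ N - 3 by omega), hrz] at hstr2
        dsimp only at hveq hstr1 hstr2
        ring_nf at hveq hstr1 hstr2 hlam
        linarith
      · -- j = N - 3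
        have hj3 : j = N - 3 := by omega
        subst hj3
        have hveq := hvd (2, N - 3) hsF
        rw [hda, eval_a12p_hi hN hsF h00 vd rfl, hrz] at hveq
        have hstr1 := hQlt (2, N - 3) hsF Lab.a12
          (Or.inr (Or.inl ⟨rfl, Or.inr ⟨rfl, (show 3 ≤ N - 3 by omega),
            le_refl _⟩⟩))
          (fun e he => ((hext e he).1 (N - 3) h3 (le_refl _)).2)
        rw [eval_a12_hi hN hsF h00 vd rfl, hrz] at hstr1
        have hsF2 : ((2 : ℕ), N - 2) ∈ ShatF N := mem_F (by omega) (by omega)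
        have h002 : ((2 : ℕ), N - 2) ≠ ((0 : ℕ), (0 : ℕ)) :=
          pne₁ (show (2 : ℕ) ≠ 0 by omega)
        have hrz2 : rhat N (2, N - 2) = 0 := rhat_ne (pne₁ (show (2 : ℕ) ≠ N by omega))
        have hstr3 := hQlt (2, N - 2) hsF2 Lab.a11
          (Or.inr (Or.inl ⟨rfl, Or.inl ⟨rfl, (show 3 ≤ N - 2 by omega),
            le_refl _⟩⟩))
          (fun e he => (hext e he).2.1)
        rw [eval_a11_hi hN hsF2 h002 vd rfl, hrz2] at hstr3
        dsimp only at hveq hstr1 hstr3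
        have k1 : 0 < 180 * (lam + 8) * (vd (2, N - 3)
            - lam * (7/18 * vd (2, N - 3) + 31/144 * vd (2, N - 2)
              + 19/48 * vd (2, N))) :=
          mul_pos (by linarith) (by linarith)
        have k3 : 0 ≤ 25 * lam * (vd (2, N - 2)
            - lam * (1/4 * vd (2, N - 2) + 3/4 * vd (2, N))) :=
          mul_nonneg (by linarith) (by linarith)
        have k0 : 0 ≤ (38 * lam + 99) * (vd (2, N - 3) - lam * vd (2, N - 3)) :=
          mul_nonneg (by linarith) (by linarith)
        have key : 81 * (3 * lam + 19) * (vd (2, N - 3)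
              - lam * (4/9 * vd (2, N - 3) + 5/27 * vd (2, N - 2)
                + 10/27 * vd (2, N)))
            = 180 * (lam + 8) * (vd (2, N - 3)
              - lam * (7/18 * vd (2, N - 3) + 31/144 * vd (2, N - 2)
                + 19/48 * vd (2, N)))
            + 25 * lam * (vd (2, N - 2)
              - lam * (1/4 * vd (2, N - 2) + 3/4 * vd (2, N)))
            + (38 * lam + 99) * (vd (2, N - 3) - lam * vd (2, N - 3)) := by ring
        have hz : vd (2, N - 3) - lam * (4/9 * vd (2, N - 3)
            + 5/27 * vd (2, N - 2) + 10/27 * vd (2, N)) = 0 := by linarith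
        rw [hz, mul_zero] at key
        linarith
  · -- (2, N - 2)
    intro hda
    have hsF : ((2 : ℕ), N - 2) ∈ ShatF N := mem_F (by omega) (by omega)
    have h00 : ((2 : ℕ), N - 2) ≠ ((0 : ℕ), (0 : ℕ)) := pne₁ (show (2 : ℕ) ≠ 0 by omega)
    have hrz : rhat N (2, N - 2) = 0 := rhat_ne (pne₁ (show (2 : ℕ) ≠ N by omega))
    have hge := hnn (2, N - 2) hsF
    have hlam : lam * vd (2, N - 2) ≤ vd (2, N - 2) := by nlinarith [hge, hl1]
    have hveq := hvd (2, N - 2) hsF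
    rw [hda, eval_a11p_hi hN hsF h00 vd rfl, hrz] at hveq
    have hstr := hQlt (2, N - 2) hsF Lab.a11
      (Or.inr (Or.inl ⟨rfl, Or.inl ⟨rfl, (show 3 ≤ N - 2 by omega), le_refl _⟩⟩))
      (fun e he => (hext e he).2.1)
    rw [eval_a11_hi hN hsF h00 vd rfl, hrz] at hstr
    dsimp only at hveq hstr
    ring_nf at hveq hstr hlam
    linarith
  · -- (i, 2) for 3 ≤ i ≤ N - 3
    intro i h3 hi
    have hsF : (i, (2 : ℕ)) ∈ ShatF N := mem_F (by omega) (by omega)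
    have h00 : (i, (2 : ℕ)) ≠ ((0 : ℕ), (0 : ℕ)) := pne₂ (show (2 : ℕ) ≠ 0 by omega)
    have hrz : rhat N (i, 2) = 0 := rhat_ne (pne₂ (show (2 : ℕ) ≠ N by omega))
    have hge := hnn (i, 2) hsF
    have hlam : lam * vd (i, 2) ≤ vd (i, 2) := by nlinarith [hge, hl1]
    constructor
    · intro hda
      have hveq := hvd (i, 2) hsF
      rw [hda, eval_a21p_lo hN hsF h00 vd (show i ≤ N - 3 by omega), hrz] at hveq
      have hstr := hQlt (i, 2) hsF Lab.a21
        (Or.inr (Or.inr (Or.inl ⟨rfl, Or.inl ⟨rfl, (show 3 ≤ i from h3),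
          (show i ≤ N - 2 by omega)⟩⟩)))
        (fun e he => ((hext e he).2.2.1 i h3 hi).1)
      rw [eval_a21_lo hN hsF h00 vd (show i ≤ N - 3 by omega), hrz] at hstr
      dsimp only at hveq hstr
      ring_nf at hveq hstr hlam
      linarith
    · intro hda
      rcases Nat.lt_or_ge i (N - 3) with hc | hc
      · have hveq := hvd (i, 2) hsF
        rw [hda, eval_a22p_lo hN hsF h00 vd (show i ≤ N - 4 by omega), hrz] at hveq
        have hstr1 := hQlt (i, 2) hsF Lab.a22
          (Or.inr (Or.inr (Or.inl ⟨rfl, Or.inr ⟨rfl, (show 3 ≤ i from h3),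
            (show i ≤ N - 3 by omega)⟩⟩)))
          (fun e he => ((hext e he).2.2.1 i h3 hi).2)
        rw [eval_a22_lo hN hsF h00 vd (show i ≤ N - 4 by omega), hrz] at hstr1
        have hstr2 := hQlt (i, 2) hsF Lab.a21
          (Or.inr (Or.inr (Or.inl ⟨rfl, Or.inl ⟨rfl, (show 3 ≤ i from h3),
            (show i ≤ N - 2 by omega)⟩⟩)))
          (fun e he => ((hext e he).2.2.1 i h3 hi).1)
        rw [eval_a21_lo hN hsF h00 vd (show i ≤ N - 3 by omega), hrz] at hstr2
        dsimp only at hveq hstr1 hstr2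
        ring_nf at hveq hstr1 hstr2 hlam
        linarith
      · have hi3 : i = N - 3 := by omega
        subst hi3
        have hveq := hvd (N - 3, 2) hsF
        rw [hda, eval_a22p_hi hN hsF h00 vd rfl, hrz] at hveq
        have hstr1 := hQlt (N - 3, 2) hsF Lab.a22
          (Or.inr (Or.inr (Or.inl ⟨rfl, Or.inr ⟨rfl, (show 3 ≤ N - 3 by omega),
            le_refl _⟩⟩)))
          (fun e he => ((hext e he).2.2.1 (N - 3) h3 (le_refl _)).2)
        rw [eval_a22_hi hN hsF h00 vd rfl, hrz] at hstr1
        have hsF2 : ((N - 2 : ℕ), (2 : ℕ)) ∈ ShatF N := mem_F (by omega) (by omega)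
        have h002 : ((N - 2 : ℕ), (2 : ℕ)) ≠ ((0 : ℕ), (0 : ℕ)) :=
          pne₂ (show (2 : ℕ) ≠ 0 by omega)
        have hrz2 : rhat N (N - 2, 2) = 0 := rhat_ne (pne₂ (show (2 : ℕ) ≠ N by omega))
        have hstr3 := hQlt (N - 2, 2) hsF2 Lab.a21
          (Or.inr (Or.inr (Or.inl ⟨rfl, Or.inl ⟨rfl, (show 3 ≤ N - 2 by omega),
            le_refl _⟩⟩)))
          (fun e he => (hext e he).2.2.2.1)
        rw [eval_a21_hi hN hsF2 h002 vd rfl, hrz2] at hstr3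
        dsimp only at hveq hstr1 hstr3
        have k1 : 0 < 180 * (lam + 8) * (vd (N - 3, 2)
            - lam * (7/18 * vd (N - 3, 2) + 31/144 * vd (N - 2, 2)
              + 19/48 * vd (N, 2))) :=
          mul_pos (by linarith) (by linarith)
        have k3 : 0 ≤ 25 * lam * (vd (N - 2, 2)
            - lam * (1/4 * vd (N - 2, 2) + 3/4 * vd (N, 2))) :=
          mul_nonneg (by linarith) (by linarith)
        have k0 : 0 ≤ (38 * lam + 99) * (vd (N - 3, 2) - lam * vd (N - 3, 2)) :=
          mul_nonneg (by linarith) (by linarith)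
        have key : 81 * (3 * lam + 19) * (vd (N - 3, 2)
              - lam * (4/9 * vd (N - 3, 2) + 5/27 * vd (N - 2, 2)
                + 10/27 * vd (N, 2)))
            = 180 * (lam + 8) * (vd (N - 3, 2)
              - lam * (7/18 * vd (N - 3, 2) + 31/144 * vd (N - 2, 2)
                + 19/48 * vd (N, 2)))
            + 25 * lam * (vd (N - 2, 2)
              - lam * (1/4 * vd (N - 2, 2) + 3/4 * vd (N, 2)))
            + (38 * lam + 99) * (vd (N - 3, 2) - lam * vd (N - 3, 2)) := by ring
        have hz : vd (N - 3, 2) - lam * (4/9 * vd (N - 3, 2)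
            + 5/27 * vd (N - 2, 2) + 10/27 * vd (N, 2)) = 0 := by linarith
        rw [hz, mul_zero] at key
        linarith
  · -- (N - 2, 2)
    intro hda
    have hsF : ((N - 2 : ℕ), (2 : ℕ)) ∈ ShatF N := mem_F (by omega) (by omega)
    have h00 : ((N - 2 : ℕ), (2 : ℕ)) ≠ ((0 : ℕ), (0 : ℕ)) :=
      pne₂ (show (2 : ℕ) ≠ 0 by omega)
    have hrz : rhat N (N - 2, 2) = 0 := rhat_ne (pne₂ (show (2 : ℕ) ≠ N by omega))
    have hge := hnn (N - 2, 2) hsF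
    have hlam : lam * vd (N - 2, 2) ≤ vd (N - 2, 2) := by nlinarith [hge, hl1]
    have hveq := hvd (N - 2, 2) hsF
    rw [hda, eval_a21p_hi hN hsF h00 vd rfl, hrz] at hveq
    have hstr := hQlt (N - 2, 2) hsF Lab.a21
      (Or.inr (Or.inr (Or.inl ⟨rfl, Or.inl ⟨rfl, (show 3 ≤ N - 2 by omega),
        le_refl _⟩⟩)))
      (fun e he => (hext e he).2.2.2.1)
    rw [eval_a21_hi hN hsF h00 vd rfl, hrz] at hstr
    dsimp only at hveq hstr
    ring_nf at hveq hstr hlam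
    linarith
  · -- (2,2), a11p
    intro hda
    have hsF : ((2 : ℕ), (2 : ℕ)) ∈ ShatF N := mem_F (by omega) (by omega)
    have h00 : ((2 : ℕ), (2 : ℕ)) ≠ ((0 : ℕ), (0 : ℕ)) := pne₁ (show (2 : ℕ) ≠ 0 by omega)
    have hrz : rhat N (2, 2) = 0 := rhat_ne (pne₁ (show (2 : ℕ) ≠ N by omega))
    have hge := hnn (2, 2) hsF
    have hlam : lam * vd (2, 2) ≤ vd (2, 2) := by nlinarith [hge, hl1]
    have hveq := hvd (2, 2) hsF
    rw [hda, eval_a11p_lo hN hsF h00 vd (show (2 : ℕ) ≤ N - 3 by omega), hrz] at hveq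
    have hstr := hQlt (2, 2) hsF Lab.a11
      (Or.inr (Or.inr (Or.inr ⟨rfl, Or.inl rfl⟩)))
      (fun e he => (hext e he).2.2.2.2.1)
    rw [eval_a11_lo hN hsF h00 vd (show (2 : ℕ) ≤ N - 3 by omega), hrz] at hstr
    dsimp only at hveq hstr
    ring_nf at hveq hstr hlam
    linarith
  · -- (2,2), a12p
    intro hda
    have hsF : ((2 : ℕ), (2 : ℕ)) ∈ ShatF N := mem_F (by omega) (by omega)
    have h00 : ((2 : ℕ), (2 : ℕ)) ≠ ((0 : ℕ), (0 : ℕ)) := pne₁ (show (2 : ℕ) ≠ 0 by omega)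
    have hrz : rhat N (2, 2) = 0 := rhat_ne (pne₁ (show (2 : ℕ) ≠ N by omega))
    have hge := hnn (2, 2) hsF
    have hlam : lam * vd (2, 2) ≤ vd (2, 2) := by nlinarith [hge, hl1]
    have hveq := hvd (2, 2) hsF
    rw [hda, eval_a12p_lo hN hsF h00 vd (show (2 : ℕ) ≤ N - 4 by omega), hrz] at hveq
    have hstr1 := hQlt (2, 2) hsF Lab.a12
      (Or.inr (Or.inr (Or.inr ⟨rfl, Or.inr (Or.inl rfl)⟩)))
      (fun e he => (hext e he).2.2.2.2.2.1)
    rw [eval_a12_lo hN hsF h00 vd (show (2 : ℕ) ≤ N - 4 by omega), hrz] at hstr1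
    have hstr2 := hQlt (2, 2) hsF Lab.a11
      (Or.inr (Or.inr (Or.inr ⟨rfl, Or.inl rfl⟩)))
      (fun e he => (hext e he).2.2.2.2.1)
    rw [eval_a11_lo hN hsF h00 vd (show (2 : ℕ) ≤ N - 3 by omega), hrz] at hstr2
    dsimp only at hveq hstr1 hstr2
    ring_nf at hveq hstr1 hstr2 hlam
    linarith
  · -- (2,2), a21p
    intro hda
    have hsF : ((2 : ℕ), (2 : ℕ)) ∈ ShatF N := mem_F (by omega) (by omega)
    have h00 : ((2 : ℕ), (2 : ℕ)) ≠ ((0 : ℕ), (0 : ℕ)) := pne₁ (show (2 : ℕ) ≠ 0 by omega)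
    have hrz : rhat N (2, 2) = 0 := rhat_ne (pne₁ (show (2 : ℕ) ≠ N by omega))
    have hge := hnn (2, 2) hsF
    have hlam : lam * vd (2, 2) ≤ vd (2, 2) := by nlinarith [hge, hl1]
    have hveq := hvd (2, 2) hsF
    rw [hda, eval_a21p_lo hN hsF h00 vd (show (2 : ℕ) ≤ N - 3 by omega), hrz] at hveq
    have hstr := hQlt (2, 2) hsF Lab.a21
      (Or.inr (Or.inr (Or.inr ⟨rfl, Or.inr (Or.inr (Or.inl rfl))⟩)))
      (fun e he => (hext e he).2.2.2.2.2.2.1)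
    rw [eval_a21_lo hN hsF h00 vd (show (2 : ℕ) ≤ N - 3 by omega), hrz] at hstr
    dsimp only at hveq hstr
    ring_nf at hveq hstr hlam
    linarith
  · -- (2,2), a22p
    intro hda
    have hsF : ((2 : ℕ), (2 : ℕ)) ∈ ShatF N := mem_F (by omega) (by omega)
    have h00 : ((2 : ℕ), (2 : ℕ)) ≠ ((0 : ℕ), (0 : ℕ)) := pne₁ (show (2 : ℕ) ≠ 0 by omega)
    have hrz : rhat N (2, 2) = 0 := rhat_ne (pne₁ (show (2 : ℕ) ≠ N by omega))
    have hge := hnn (2, 2) hsF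
    have hlam : lam * vd (2, 2) ≤ vd (2, 2) := by nlinarith [hge, hl1]
    have hveq := hvd (2, 2) hsF
    rw [hda, eval_a22p_lo hN hsF h00 vd (show (2 : ℕ) ≤ N - 4 by omega), hrz] at hveq
    have hstr1 := hQlt (2, 2) hsF Lab.a22
      (Or.inr (Or.inr (Or.inr ⟨rfl, Or.inr (Or.inr (Or.inr rfl))⟩)))
      (fun e he => (hext e he).2.2.2.2.2.2.2)
    rw [eval_a22_lo hN hsF h00 vd (show (2 : ℕ) ≤ N - 4 by omega), hrz] at hstr1
    have hstr2 := hQlt (2, 2) hsF Lab.a21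
      (Or.inr (Or.inr (Or.inr ⟨rfl, Or.inr (Or.inr (Or.inl rfl))⟩)))
      (fun e he => (hext e he).2.2.2.2.2.2.1)
    rw [eval_a21_lo hN hsF h00 vd (show (2 : ℕ) ≤ N - 3 by omega), hrz] at hstr2
    dsimp only at hveq hstr1 hstr2
    ring_nf at hveq hstr1 hstr2 hlam
    linarith

end AuxMDP
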